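/- For any integer m with 0 ≤ m ≤ n, let θ = F(β) with β = (2, 2, 1 − 2m). Then for every x ∈ {0,1}ⁿ, the condition E(x^{(j)}; θ) − E(x; θ) ≥ 1 holds for all j ∈ {1,…,n} if and only if ‖x‖₀ = m. -/

import Mathlib

open scoped BigOperators
open scoped Classical
open Matrix MeasureTheory

namespace HopfieldPaper

/-- The space of (not necessarily admissible) Hopfield parameters `θ = (W, b)`. -/
abbrev Param (n : ℕ) := Matrix (Fin n) (Fin n) ℝ × (Fin n → ℝ)

variable {n : ℕ}

/-- `θ = (W, b)` is a Hopfield parameter: `W` is symmetric with zero diagonal. -/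
def IsHopfieldParam (θ : Param n) : Prop :=
  θ.1.IsSymm ∧ ∀ i, θ.1 i i = 0

/-- `x ∈ {0,1}ⁿ`. -/
def IsBinary (x : Fin n → ℝ) : Prop := ∀ i, x i = 0 ∨ x i = 1

/-- Energy `E(x; θ) = (1/2)·xᵀWx + bᵀx`. -/
noncomputable def energy (x : Fin n → ℝ) (θ : Param n) : ℝ :=
  (1 / 2) * (∑ i, ∑ j, x i * θ.1 i j * x j) + ∑ j, θ.2 j * x j

/-- `x^{(j)}`: the vector differing from `x` exactly in coordinate `j`. -/
noncomputable def flip (x : Fin n → ℝ) (j : Fin n) : Fin n → ℝ :=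
  Function.update x j (1 - x j)

/-- The inner product on parameter space.  Under the identification of
`θ = (W, b)` with `ω = (√2·a, b) ∈ ℝ^q` (`a` the strictly upper-triangular
entries of `W`), the Euclidean inner product on `ℝ^q` corresponds to
`⟨θ, η⟩ = Σᵢⱼ Wᵢⱼ·W'ᵢⱼ + Σⱼ bⱼ·b'ⱼ`; in particular `‖ω‖² = ‖W‖_F² + ‖b‖²`. -/
noncomputable def pInner (θ η : Param n) : ℝ :=
  (∑ i, ∑ j, θ.1 i j * η.1 i j) + ∑ j, θ.2 j * η.2 j

/-- The norm on parameter space: `‖ω‖ = √(‖W‖_F² + ‖b‖²)`. -/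
noncomputable def pNorm (θ : Param n) : ℝ := Real.sqrt (pInner θ θ)

/-- The representer `u_j(x)`: the unique element of parameter space with
`⟨u_j(x), θ⟩ = E(x^{(j)}; θ) − E(x; θ)` for every Hopfield parameter `θ`. -/
noncomputable def uvec (x : Fin n → ℝ) (j : Fin n) : Param n :=
  (Matrix.of fun i l =>
      if i = j ∧ l ≠ j then (1 - 2 * x j) * x l / 2
      else if l = j ∧ i ≠ j then (1 - 2 * x j) * x i / 2
      else 0,
   fun l => if l = j then 1 - 2 * x j else 0)

/-- `‖x‖₀`: the number of nonzero coordinates. -/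
noncomputable def l0norm (x : Fin n → ℝ) : ℕ :=
  (Finset.univ.filter fun i => x i ≠ 0).card

variable {v : ℕ}

/-- The type of unordered pairs of distinct elements of `Fin v`
(the "unordered pairs of `{1,…,v}`"). -/
abbrev EdgeIdx (v : ℕ) := {p : Sym2 (Fin v) // ¬ p.IsDiag}

/-- The permutation of `Sym2 (Fin v)` induced by a vertex permutation. -/
def sym2Perm (φ : Equiv.Perm (Fin v)) : Equiv.Perm (Sym2 (Fin v)) where
  toFun := Sym2.map φ
  invFun := Sym2.map φ.symm
  left_inv := fun p => by rw [Sym2.map_map]; simp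
  right_inv := fun p => by rw [Sym2.map_map]; simp

/-- The induced permutation of unordered pairs of distinct vertices. -/
def offDiagPerm (φ : Equiv.Perm (Fin v)) : Equiv.Perm (EdgeIdx v) :=
  (sym2Perm φ).subtypePerm (fun p => by
    simp only [sym2Perm, Equiv.coe_fn_mk]
    exact (Sym2.isDiag_map φ.injective).not)

/-- The edge permutation `π_φ` of `{1,…,n}` induced by the vertex permutation
`φ`; it satisfies `π_φ(Ind({a,b})) = Ind({φ(a),φ(b)})`. -/
def edgePerm (Ind : EdgeIdx v ≃ Fin n) (φ : Equiv.Perm (Fin v)) :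
    Equiv.Perm (Fin n) :=
  Ind.permCongr (offDiagPerm φ)

/-- `Φ_n`: the set of permutation matrices of vertex-induced edge permutations. -/
noncomputable def PhiSet (Ind : EdgeIdx v ≃ Fin n) :
    Set (Matrix (Fin n) (Fin n) ℝ) :=
  {P | ∃ φ : Equiv.Perm (Fin v), P = (edgePerm Ind φ).permMatrix ℝ}

/-- The two-element vertex set `Ind⁻¹(j)` of an edge index, as a `Finset`. -/
noncomputable def pairFinset (Ind : EdgeIdx v ≃ Fin n) (j : Fin n) : Finset (Fin v) :=
  Finset.univ.filter (fun a => a ∈ (Ind.symm j : Sym2 (Fin v)))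

/-- Edge adjacency: `j ∼ l` iff `|Ind⁻¹(j) ∩ Ind⁻¹(l)| = 1`. -/
noncomputable def edgeAdj (Ind : EdgeIdx v ≃ Fin n) (j l : Fin n) : Prop :=
  (pairFinset Ind j ∩ pairFinset Ind l).card = 1

/-- A permutation of edge indices preserves edge adjacency. -/
noncomputable def PreservesEdgeAdj (Ind : EdgeIdx v ≃ Fin n)
    (π : Equiv.Perm (Fin n)) : Prop :=
  ∀ j l : Fin n, edgeAdj Ind (π j) (π l) ↔ edgeAdj Ind j l

/-- `Q_n`: the set of permutation matrices of edge-adjacency-preserving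
permutations. -/
noncomputable def QSet (Ind : EdgeIdx v ≃ Fin n) :
    Set (Matrix (Fin n) (Fin n) ℝ) :=
  {Q | ∃ π : Equiv.Perm (Fin n), PreservesEdgeAdj Ind π ∧ Q = π.permMatrix ℝ}

/-- Orbit of a vector under a set of matrices: `Orb(x, Γ) = {P·x : P ∈ Γ}`. -/
noncomputable def morb (Γ : Set (Matrix (Fin n) (Fin n) ℝ)) (x : Fin n → ℝ) :
    Set (Fin n → ℝ) :=
  {y | ∃ P ∈ Γ, y = P.mulVec x}

/-- The linear map `F : ℝ³ → Θ` sending `β` to `(W, b)` with `W_{ij} = 0` if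
`i = j`, `W_{ij} = β₁` if `i ∼ j`, `W_{ij} = β₂` if `i ≠ j` and `i ≁ j`, and
`b_j = β₃`. -/
noncomputable def Fmap (Ind : EdgeIdx v ≃ Fin n) (β : ℝ × ℝ × ℝ) : Param n :=
  (Matrix.of fun i j =>
      if i = j then 0 else if edgeAdj Ind i j then β.1 else β.2.1,
   fun _ => β.2.2)

lemma binary_sq {x : Fin n → ℝ} (hx : IsBinary x) (i : Fin n) : x i * x i = x i := by
  rcases hx i with h | h <;> rw [h] <;> ring

lemma flip_binary {x : Fin n → ℝ} (hx : IsBinary x) (j : Fin n) :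
    IsBinary (flip x j) := by
  intro i
  unfold flip
  rcases eq_or_ne i j with rfl | h
  · rcases hx i with h | h <;> simp [h]
  · rw [Function.update_of_ne h]; exact hx i

lemma sum_flip (x : Fin n → ℝ) (j : Fin n) :
    ∑ i, flip x j i = (∑ i, x i) + (1 - 2 * x j) := by
  unfold flip
  rw [Finset.sum_update_of_mem (Finset.mem_univ j)]
  have h1 : ∑ i ∈ Finset.univ \ {j}, x i = (∑ i, x i) - x j := by
    rw [Finset.sum_sdiff_eq_sub (Finset.subset_univ _), Finset.sum_singleton]
  rw [h1]; ring

lemma sum_eq_l0 {x : Fin n → ℝ} (hx : IsBinary x) : ∑ i, x i = (l0norm x : ℝ) := by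
  unfold l0norm
  have h1 : ∑ i ∈ Finset.univ.filter (fun i => x i ≠ 0), x i
      = ∑ _i ∈ Finset.univ.filter (fun i => x i ≠ 0), (1 : ℝ) := by
    refine Finset.sum_congr rfl fun i hi => ?_
    rcases hx i with h | h
    · exact absurd h (Finset.mem_filter.mp hi).2
    · exact h
  rw [← Finset.sum_filter_of_ne (fun i _ h => h), h1, Finset.sum_const,
    nsmul_eq_mul, mul_one]

lemma energy_const {v : ℕ} (Ind : EdgeIdx v ≃ Fin n) (c : ℝ) {x : Fin n → ℝ}
    (hx : IsBinary x) :
    energy x (Fmap Ind (2, 2, c)) =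
      (∑ i, x i) * (∑ i, x i) - (∑ i, x i) + c * (∑ i, x i) := by
  have hW : ∀ i j : Fin n, (Fmap Ind (2, 2, c)).1 i j = if i = j then 0 else 2 := by
    intro i j; simp [Fmap]
  have hterm : ∀ i j : Fin n, x i * (Fmap Ind (2, 2, c)).1 i j * x j
      = 2 * x i * x j - (if i = j then 2 * x i * x j else 0) := by
    intro i j; rw [hW]; split_ifs <;> ring
  have hsum : ∑ i, ∑ j, x i * (Fmap Ind (2, 2, c)).1 i j * x j
      = 2 * (∑ i, x i) * (∑ i, x i) - 2 * (∑ i, x i) := by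
    simp only [hterm, Finset.sum_sub_distrib]
    congr 1
    · have hss : (∑ i, x i) * (∑ i, x i) = ∑ i, ∑ j, x i * x j :=
        Finset.sum_mul_sum _ _ _ _
      rw [mul_assoc, hss, Finset.mul_sum]
      refine Finset.sum_congr rfl fun i _ => ?_
      rw [Finset.mul_sum]
      refine Finset.sum_congr rfl fun j _ => ?_
      ring
    · rw [Finset.mul_sum]
      refine Finset.sum_congr rfl fun i _ => ?_
      rw [Finset.sum_ite_eq Finset.univ i (fun j => 2 * x i * x j),
        if_pos (Finset.mem_univ i)]
      rw [mul_assoc, binary_sq hx]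
  unfold energy
  rw [hsum]
  have hb : ∑ j, (Fmap Ind (2, 2, c)).2 j * x j = c * (∑ i, x i) := by
    simp [Fmap, Finset.mul_sum]
  rw [hb]
  ring

lemma gap_formula {v : ℕ} (Ind : EdgeIdx v ≃ Fin n) (m : ℝ) {x : Fin n → ℝ}
    (hx : IsBinary x) (j : Fin n) :
    energy (flip x j) (Fmap Ind (2, 2, 1 - 2 * m))
      - energy x (Fmap Ind (2, 2, 1 - 2 * m))
      = 2 * (1 - 2 * x j) * ((∑ i, x i) - m) + 1 := by
  rw [energy_const Ind _ (flip_binary hx j), energy_const Ind _ hx, sum_flip]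
  have hd2 : x j * x j = x j := binary_sq hx j
  nlinarith [hd2]

/-- With `θ = F(2, 2, 1 − 2m)`, a binary `x` has all energy
gaps at least 1 iff `‖x‖₀ = m`. -/
theorem Fmap_memorizes_iff_sparsity {v n : ℕ} (hv : 2 ≤ v)
    (Ind : EdgeIdx v ≃ Fin n) (m : ℕ) (hm : m ≤ n) (x : Fin n → ℝ)
    (hx : IsBinary x) :
    (∀ j : Fin n,
        energy (flip x j) (Fmap Ind (2, 2, 1 - 2 * (m : ℝ)))
          - energy x (Fmap Ind (2, 2, 1 - 2 * (m : ℝ))) ≥ 1) ↔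
    l0norm x = m := by
  have hSk : ∑ i, x i = (l0norm x : ℝ) := sum_eq_l0 hx
  constructor
  · intro h
    by_contra hne
    rcases lt_or_gt_of_ne hne with hlt | hgt
    · -- l0norm x < m ≤ n : find a coordinate equal to 0
      have hjz : ∃ j : Fin n, x j = 0 := by
        by_contra hc
        push_neg at hc
        have huniv : Finset.univ.filter (fun i => x i ≠ 0) = Finset.univ := by
          ext i; simp [hc i]
        have : l0norm x = n := by
          unfold l0norm; rw [huniv, Finset.card_univ, Fintype.card_fin]
        omega
      obtain ⟨j, hj⟩ := hjz
      have := h j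
      rw [gap_formula Ind _ hx j, hj] at this
      have hSm : (m : ℝ) ≤ ∑ i, x i := by nlinarith
      rw [hSk] at hSm
      exact absurd (Nat.cast_le.mp hSm) (not_le.mpr hlt)
    · -- l0norm x > m : find a coordinate equal to 1
      have hjz : ∃ j : Fin n, x j = 1 := by
        have hpos : 0 < l0norm x := lt_of_le_of_lt (Nat.zero_le m) hgt
        obtain ⟨j, hj⟩ := Finset.card_pos.mp hpos
        rcases hx j with h0 | h1
        · exact absurd h0 (Finset.mem_filter.mp hj).2
        · exact ⟨j, h1⟩
      obtain ⟨j, hj⟩ := hjz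
      have := h j
      rw [gap_formula Ind _ hx j, hj] at this
      have hSm : ∑ i, x i ≤ (m : ℝ) := by nlinarith
      rw [hSk] at hSm
      exact absurd (Nat.cast_le.mp hSm) (not_le.mpr hgt)
  · intro h j
    rw [gap_formula Ind _ hx j, hSk, h]
    simp

end HopfieldPaper
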